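/- The law sum-to-prod of commutative Kleene algebra is derivable: for all commutative regular expressions e and f, (e ∪ f)* ≡ e*·f*. -/
import Mathlib


namespace CKAnote

/-- Commutative regular expressions over an alphabet `α`. -/
inductive CRE (α : Type) where
  | zero : CRE α
  | one : CRE α
  | letter : α → CRE α
  | mul : CRE α → CRE α → CRE α
  | union : CRE α → CRE α → CRE α
  | star : CRE α → CRE α

variable {α : Type} [Fintype α] [DecidableEq α]

/-- Semantics of a commutative regular expression as a set of Parikh vectors. -/
def sem : CRE α → Set (α → ℕ)
  | .zero => ∅
  | .one => {0}
  | .letter a => {Pi.single a 1}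
  | .mul e f => {w | ∃ u ∈ sem e, ∃ v ∈ sem f, w = u + v}
  | .union e f => sem e ∪ sem f
  | .star e => ↑(AddSubmonoid.closure (sem e))

/-- Provable equality: the smallest congruence containing the axioms of
commutative Kleene algebra (where `e ≤ f` abbreviates `e ∪ f ≡ f`). -/
inductive CKA : CRE α → CRE α → Prop
  | refl (e : CRE α) : CKA e e
  | symm {e f : CRE α} : CKA e f → CKA f e
  | trans {e f g : CRE α} : CKA e f → CKA f g → CKA e g
  | mul_congr {e e' f f' : CRE α} : CKA e e' → CKA f f' → CKA (e.mul f) (e'.mul f')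
  | union_congr {e e' f f' : CRE α} : CKA e e' → CKA f f' → CKA (e.union f) (e'.union f')
  | star_congr {e e' : CRE α} : CKA e e' → CKA e.star e'.star
  | mul_assoc (e f g : CRE α) : CKA (e.mul (f.mul g)) ((e.mul f).mul g)
  | mul_comm (e f : CRE α) : CKA (e.mul f) (f.mul e)
  | one_mul (e : CRE α) : CKA (CRE.one.mul e) e
  | union_assoc (e f g : CRE α) : CKA (e.union (f.union g)) ((e.union f).union g)
  | union_comm (e f : CRE α) : CKA (e.union f) (f.union e)
  | union_idem (e : CRE α) : CKA (e.union e) e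
  | zero_union (e : CRE α) : CKA (CRE.zero.union e) e
  | zero_mul (e : CRE α) : CKA (CRE.zero.mul e) CRE.zero
  | left_distrib (e f g : CRE α) : CKA (e.mul (f.union g)) ((e.mul f).union (e.mul g))
  | star_unfold (e : CRE α) : CKA ((CRE.one.union (e.mul e.star)).union e.star) e.star
  | star_lfp {e f : CRE α} : CKA ((e.mul f).union f) f → CKA ((e.star.mul f).union f) f

/-- `e ≤ f`, i.e. `e ∪ f ≡ f`. -/
def leq (e f : CRE α) : Prop := CKA (e.union f) f

/-- `e^n`, the `n`-fold product of `e` with itself. -/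
def pow (e : CRE α) : ℕ → CRE α
  | 0 => CRE.one
  | n + 1 => e.mul (pow e n)

/-- `e^{<n}`, i.e. `(e ∪ 1)^(n-1)` for `n > 0` and `0` for `n = 0`. -/
def ltPow (e : CRE α) : ℕ → CRE α
  | 0 => CRE.zero
  | n + 1 => pow (e.union CRE.one) n

/-- Finite union of a list of expressions. -/
def unionList : List (CRE α) → CRE α
  | [] => CRE.zero
  | e :: l => e.union (unionList l)

/-- Finite product of a list of expressions. -/
def prodList : List (CRE α) → CRE α
  | [] => CRE.one
  | e :: l => e.mul (prodList l)

/-- `expr(u)`: the product over `a ∈ α` of `u a` copies of the letter `a`. -/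
noncomputable def exprVec (u : α → ℕ) : CRE α :=
  prodList ((Finset.univ : Finset α).toList.map (fun a => pow (CRE.letter a) (u a)))

/-- The union `⋃_{b ∈ B} expr(b)` for a finite set of Parikh vectors `B`. -/
noncomputable def unionVecs (B : Finset (α → ℕ)) : CRE α :=
  unionList (B.toList.map exprVec)

/-- The linear expression `expr(u) · (⋃_{b ∈ B} expr(b))*`. -/
noncomputable def linExpr (u : α → ℕ) (B : Finset (α → ℕ)) : CRE α :=
  (exprVec u).mul (unionVecs B).star

/-- A finite set of Parikh vectors is independent when every Parikh vector
admits at most one representation as an `ℕ`-linear combination of its elements. -/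
def Independent (B : Finset (α → ℕ)) : Prop :=
  ∀ c d : (α → ℕ) → ℕ, (∑ b ∈ B, c b • b) = (∑ b ∈ B, d b • b) → ∀ b ∈ B, c b = d b

/-- The semilinear expression associated to a list of linear data:
the finite union of the corresponding linear expressions. -/
noncomputable def semiLin (L : List ((α → ℕ) × Finset (α → ℕ))) : CRE α :=
  unionList (L.map (fun p => linExpr p.1 p.2))

/-- The dimension of a semilinear expression: the maximum of the dimensions
of its linear components. -/
def dimSL (L : List ((α → ℕ) × Finset (α → ℕ))) : ℕ :=
  (L.map (fun p => p.2.card)).foldr max 0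

/-- Finitary (star-free) expressions. -/
def NoStar : CRE α → Prop
  | .zero => True
  | .one => True
  | .letter _ => True
  | .mul e f => NoStar e ∧ NoStar f
  | .union e f => NoStar e ∧ NoStar f
  | .star _ => False

/-- Coordinatewise embedding of `ℕ^α` into `ℚ^α`. -/
def toQ (v : α → ℕ) : α → ℚ := fun a => (v a : ℚ)

lemma leq_refl (e : CRE α) : leq e e := CKA.union_idem e

lemma cka_of_leq_leq {e f : CRE α} (h1 : leq e f) (h2 : leq f e) : CKA e f :=
  (CKA.symm h2).trans ((CKA.union_comm f e).trans h1)

lemma leq_congr {e e' f f' : CRE α} (he : CKA e e') (hf : CKA f f')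
    (h : leq e f) : leq e' f' :=
  ((CKA.union_congr he.symm hf.symm).trans h).trans hf

lemma leq_trans {e f g : CRE α} (h1 : leq e f) (h2 : leq f g) : leq e g :=
  ((CKA.union_congr (CKA.refl e) h2.symm).trans (CKA.union_assoc e f g)).trans
    ((CKA.union_congr h1 (CKA.refl g)).trans h2)

lemma leq_union_left (e f : CRE α) : leq e (e.union f) :=
  (CKA.union_assoc e e f).trans (CKA.union_congr (CKA.union_idem e) (CKA.refl f))

lemma leq_union_right (e f : CRE α) : leq f (e.union f) :=
  leq_congr (CKA.refl f) (CKA.union_comm f e) (leq_union_left f e)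

lemma union_lub {e f g : CRE α} (h1 : leq e g) (h2 : leq f g) : leq (e.union f) g :=
  ((CKA.union_assoc e f g).symm.trans (CKA.union_congr (CKA.refl e) h2)).trans h1

lemma leq_of_eq_union {e f g : CRE α} (h : CKA (e.union f) g) : leq e g :=
  (CKA.union_congr (CKA.refl e) h.symm).trans ((leq_union_left e f).trans h)

lemma right_distrib (e f g : CRE α) :
    CKA ((e.union f).mul g) ((e.mul g).union (f.mul g)) :=
  (CKA.mul_comm _ g).trans ((CKA.left_distrib g e f).trans
    (CKA.union_congr (CKA.mul_comm g e) (CKA.mul_comm g f)))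

lemma mul_one' (e : CRE α) : CKA (e.mul CRE.one) e :=
  (CKA.mul_comm e CRE.one).trans (CKA.one_mul e)

lemma mul_mono {e e' f f' : CRE α} (h1 : leq e e') (h2 : leq f f') :
    leq (e.mul f) (e'.mul f') := by
  have key : CKA (e'.mul f') ((e.mul f).union (e'.mul f')) :=
    (CKA.mul_congr h1.symm (CKA.refl f')).trans
      ((right_distrib e e' f').trans
        ((CKA.union_congr
            ((CKA.mul_congr (CKA.refl e) h2.symm).trans (CKA.left_distrib e f f'))
            (CKA.refl (e'.mul f'))).trans
          ((CKA.union_assoc (e.mul f) (e.mul f') (e'.mul f')).symm.trans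
            (CKA.union_congr (CKA.refl (e.mul f))
              (((right_distrib e e' f').symm).trans
                (CKA.mul_congr h1 (CKA.refl f')))))))
  exact key.symm

lemma one_le_star (e : CRE α) : leq CRE.one e.star :=
  leq_trans (leq_union_left CRE.one (e.mul e.star)) (leq_of_eq_union (CKA.star_unfold e))

lemma mul_star_le_star (e : CRE α) : leq (e.mul e.star) e.star :=
  leq_trans (leq_union_right CRE.one (e.mul e.star)) (leq_of_eq_union (CKA.star_unfold e))

lemma star_mul_star_le_star (e : CRE α) : leq (e.star.mul e.star) e.star :=
  CKA.star_lfp (mul_star_le_star e)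

lemma star_mono {e f : CRE α} (h : leq e f) : leq e.star f.star := by
  have h1 : leq (e.mul f.star) f.star :=
    leq_trans (mul_mono h (leq_refl f.star)) (mul_star_le_star f)
  have h2 : leq (e.star.mul f.star) f.star := CKA.star_lfp h1
  exact leq_congr (mul_one' e.star) (CKA.refl f.star)
    (leq_trans (mul_mono (leq_refl e.star) (one_le_star f)) h2)

/-- The sum-to-prod law is derivable: `(e ∪ f)* ≡ e* · f*`. -/
theorem sum_to_prod (e f : CRE α) :
    CKA ((e.union f).star) (e.star.mul f.star) := by
  set g := e.star.mul f.star with hg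
  have h1 : leq (e.mul g) g :=
    leq_congr (CKA.mul_assoc e e.star f.star).symm (CKA.refl g)
      (mul_mono (mul_star_le_star e) (leq_refl f.star))
  have c : CKA (f.mul g) (e.star.mul (f.mul f.star)) :=
    (CKA.mul_assoc f e.star f.star).trans
      ((CKA.mul_congr (CKA.mul_comm f e.star) (CKA.refl f.star)).trans
        (CKA.mul_assoc e.star f f.star).symm)
  have h2 : leq (f.mul g) g :=
    leq_congr c.symm (CKA.refl g) (mul_mono (leq_refl e.star) (mul_star_le_star f))
  have h3 : leq ((e.union f).mul g) g :=
    leq_congr (right_distrib e f g).symm (CKA.refl g) (union_lub h1 h2)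
  have h4 : leq ((e.union f).star.mul g) g := CKA.star_lfp h3
  have one_le_g : leq CRE.one g :=
    leq_congr (CKA.one_mul CRE.one) (CKA.refl g) (mul_mono (one_le_star e) (one_le_star f))
  have hle : leq (e.union f).star g :=
    leq_congr (mul_one' (e.union f).star) (CKA.refl g)
      (leq_trans (mul_mono (leq_refl (e.union f).star) one_le_g) h4)
  have hge : leq g (e.union f).star :=
    leq_trans (mul_mono (star_mono (leq_union_left e f)) (star_mono (leq_union_right e f)))
      (star_mul_star_le_star (e.union f))
  exact cka_of_leq_leq hle hge

end CKAnote
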